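/- Let L be a proper simplicial complex on [n] and let A ⊆ [n] with A ∉ L, A ≠ [n], such that every proper subset of A belongs to L (so that K = L ∪ {A} is again a proper simplicial complex). Then, writing facets of Bier complexes as pairs (A1, A2) of disjoint sets with A1 in the complex, A2 in its Alexander dual, and |A1| + |A2| = n − 1, one has: Facets(Bier(L ∪ {A})) = ( Facets(Bier(L)) \ { (A \ {i}, Aᶜ) : i ∈ A } ) ∪ { (A, (A ∪ {i})ᶜ) : i ∈ [n] \ A }. -/
import Mathlib


open Finset

/-- A simplicial complex on `[n]`: a family of subsets containing `∅` and
closed under taking subsets. -/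
def IsComplex (n : ℕ) (K : Set (Finset (Fin n))) : Prop :=
  ∅ ∈ K ∧ ∀ A B : Finset (Fin n), A ⊆ B → B ∈ K → A ∈ K

/-- The facets of `Bier(K)`, identified with pairs `(A1, A2)` of disjoint sets
with `A1 ∈ K`, `A2 ∈ K°` (i.e. `A2ᶜ ∉ K`) and `|A1| + |A2| = n - 1`. -/
def FacetPairs (n : ℕ) (K : Set (Finset (Fin n))) :
    Set (Finset (Fin n) × Finset (Fin n)) :=
  {p | Disjoint p.1 p.2 ∧ p.1 ∈ K ∧ p.2ᶜ ∉ K ∧ p.1.card + p.2.card = n - 1}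

/-- If `L` is a proper simplicial complex on `[n]` and
`A ∉ L`, `A ≠ [n]`, with every proper subset of `A` in `L`, then the facets of
`Bier(L ∪ {A})` are obtained from those of `Bier(L)` by removing the pairs
`(A \ {i}, Aᶜ)` for `i ∈ A` and adding the pairs `(A, (A ∪ {i})ᶜ)` for
`i ∉ A`. -/
theorem facets_bier_union_singleton (n : ℕ) (L : Set (Finset (Fin n)))
    (hL : IsComplex n L) (hproper : L ≠ Set.univ)
    (A : Finset (Fin n)) (hA : A ∉ L) (hAne : A ≠ Finset.univ)
    (hsub : ∀ B : Finset (Fin n), B ⊂ A → B ∈ L) :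
    FacetPairs n (L ∪ {A}) =
      (FacetPairs n L \
        {p : Finset (Fin n) × Finset (Fin n) | ∃ i ∈ A, p = (A.erase i, Aᶜ)}) ∪
      {p : Finset (Fin n) × Finset (Fin n) | ∃ i ∉ A, p = (A, (insert i A)ᶜ)} := by
  have hAne0 : A ≠ ∅ := fun h => hA (h ▸ hL.1)
  have hApos : 0 < A.card := Finset.card_pos.mpr (Finset.nonempty_iff_ne_empty.mpr hAne0)
  have hAlt : A.card < n := by
    have := Finset.card_lt_card (Finset.ssubset_univ_iff.mpr hAne)
    simpa using this
  ext ⟨p1, p2⟩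
  simp only [FacetPairs, Set.union_singleton, Set.mem_setOf_eq, Set.mem_union,
    Set.mem_diff, Set.mem_insert_iff]
  constructor
  · rintro ⟨hdisj, h1, h2, hcard⟩
    push_neg at h2
    rcases h1 with h1 | h1
    · obtain rfl : A = p1 := h1.symm
      refine Or.inr ?_
      have hu : (A ∪ p2).card = n - 1 := by
        rw [Finset.card_union_of_disjoint hdisj]; exact hcard
      have hcc : (A ∪ p2)ᶜ.card = 1 := by
        rw [Finset.card_compl, Fintype.card_fin, hu]; omega
      obtain ⟨i, hi⟩ := Finset.card_eq_one.mp hcc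
      have hiAp : i ∈ (A ∪ p2)ᶜ := hi ▸ Finset.mem_singleton_self i
      simp only [Finset.mem_compl, Finset.mem_union] at hiAp
      push_neg at hiAp
      refine ⟨i, hiAp.1, ?_⟩
      have hp2 : p2 = (insert i A)ᶜ := by
        ext x
        have hx := Finset.ext_iff.mp hi x
        simp only [Finset.mem_compl, Finset.mem_union, Finset.mem_singleton] at hx
        have hd : x ∈ A → x ∉ p2 := fun h => Finset.disjoint_left.mp hdisj h
        simp only [Finset.mem_compl, Finset.mem_insert]
        constructor
        · rintro hxp2 (rfl | hxA)
          · exact hiAp.2 hxp2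
          · exact hd hxA hxp2
        · intro hni
          by_contra hxp2
          have : x = i := hx.mp (by push_neg; exact ⟨fun h => hni (Or.inr h), hxp2⟩)
          exact hni (Or.inl this)
      rw [hp2]
    · refine Or.inl ⟨⟨hdisj, h1, h2.2, hcard⟩, ?_⟩
      rintro ⟨i, hiA, heq⟩
      simp only [Prod.ext_iff] at heq
      apply h2.1
      rw [heq.2, compl_compl]
  · rintro (⟨⟨hdisj, h1, h2, hcard⟩, hnot⟩ | ⟨i, hiA, heq⟩)
    · refine ⟨hdisj, Or.inr h1, ?_, hcard⟩
      rintro (hc | hc)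
      · have hp2 : p2 = Aᶜ := by rw [← compl_compl p2, hc]
        subst hp2
        have hsubA : p1 ⊆ A := by
          intro x hx
          by_contra hxA
          exact (Finset.disjoint_left.mp hdisj hx) (Finset.mem_compl.mpr hxA)
        have hcA : Aᶜ.card = n - A.card := by rw [Finset.card_compl, Fintype.card_fin]
        have hcp1 : p1.card = A.card - 1 := by omega
        have hone : (A \ p1).card = 1 := by
          rw [Finset.card_sdiff_of_subset hsubA]; omega
        obtain ⟨i, hi⟩ := Finset.card_eq_one.mp hone
        have hiA' : i ∈ A := Finset.sdiff_subset (hi ▸ Finset.mem_singleton_self i)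
        have hpe : A.erase i = p1 := by
          rw [Finset.erase_eq, ← hi, Finset.sdiff_sdiff_self_left,
            Finset.inter_eq_right.mpr hsubA]
        exact hnot ⟨i, hiA', by rw [hpe]⟩
      · exact h2 hc
    · simp only [Prod.ext_iff] at heq
      obtain ⟨h1, h2⟩ := heq
      obtain rfl : A = p1 := h1.symm
      subst h2
      refine ⟨disjoint_compl_right.mono_left (Finset.subset_insert i A), Or.inl rfl, ?_, ?_⟩
      · rw [compl_compl]
        rintro (hc | hc)
        · exact hiA (Finset.insert_eq_self.mp hc)
        · exact hA (hL.2 A (insert i A) (Finset.subset_insert i A) hc)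
      · rw [Finset.card_compl, Fintype.card_fin, Finset.card_insert_of_notMem hiA]
        omega
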